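/- If u ∈ Θ is a homogeneous polynomial of degree N, then 1 − u is invertible in MvPowerSeries σ ℚ, its inverse (1 − u)^{-1} lies in Θ, and E((1 − u)^{-1}) = exp(q·u), where exp(q·u) denotes the formal power series Σ_{k ≥ 0} (q^k / k!) · u^k in q with coefficients in MvPowerSeries σ ℚ. -/

import Mathlib

variable {σ : Type*}

/-- Total degree of a monomial. -/
def monDeg (d : σ →₀ ℕ) : ℕ := d.sum fun _ n => n

/-- `Θ`: series whose coefficients vanish in degrees not divisible by `N`. -/
def InTheta (N : ℕ) (f : MvPowerSeries σ ℚ) : Prop :=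
  ∀ d : σ →₀ ℕ, ¬ (N ∣ monDeg d) → MvPowerSeries.coeff d f = 0

/-- `f^(k)`: homogeneous component of total degree `N * k`. -/
noncomputable def homComp (N : ℕ) (f : MvPowerSeries σ ℚ) (k : ℕ) : MvPowerSeries σ ℚ :=
  fun d => if monDeg d = N * k then MvPowerSeries.coeff d f else 0

/-- The operation `⊙`: `f ⊙ g = Σ_{k,ℓ} C(k+ℓ,k) f^(k) g^(ℓ)`, defined coefficientwise
(at a monomial of total degree `m`, only indices `k, ℓ ≤ m` can contribute, for `N ≥ 1`). -/
noncomputable def odot (N : ℕ) (f g : MvPowerSeries σ ℚ) : MvPowerSeries σ ℚ :=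
  fun d => ∑ k ∈ Finset.range (monDeg d + 1), ∑ l ∈ Finset.range (monDeg d + 1),
    ((k + l).choose k : ℚ) * MvPowerSeries.coeff d (homComp N f k * homComp N g l)

/-- The `E`-transform: `E f = Σ_k (q^k / k!) f^(k)`. -/
noncomputable def Etrans (N : ℕ) (f : MvPowerSeries σ ℚ) :
    PowerSeries (MvPowerSeries σ ℚ) :=
  PowerSeries.mk fun k => (k.factorial : ℚ)⁻¹ • homComp N f k

/-- `exp(q·u) = Σ_k (q^k / k!) u^k`. -/
noncomputable def expQ (u : MvPowerSeries σ ℚ) : PowerSeries (MvPowerSeries σ ℚ) :=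
  PowerSeries.mk fun k => (k.factorial : ℚ)⁻¹ • u ^ k

/-- A homogeneous polynomial of degree `N`: finitely many nonzero coefficients,
all in total degree exactly `N`. -/
def IsHomogDeg (N : ℕ) (a : MvPowerSeries σ ℚ) : Prop :=
  {d : σ →₀ ℕ | MvPowerSeries.coeff d a ≠ 0}.Finite ∧
    ∀ d : σ →₀ ℕ, MvPowerSeries.coeff d a ≠ 0 → monDeg d = N

/-- Iterated `⊙`-product of a nonempty list. -/
noncomputable def odotList (N : ℕ) : List (MvPowerSeries σ ℚ) → MvPowerSeries σ ℚ
  | [] => 1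
  | [f] => f
  | f :: g :: rest => odot N f (odotList N (g :: rest))

lemma monDeg_add' (p q : σ →₀ ℕ) : monDeg (p + q) = monDeg p + monDeg q :=
  Finsupp.sum_add_index' (fun _ => rfl) (fun _ _ _ => rfl)

lemma monDeg_zero' : monDeg (0 : σ →₀ ℕ) = 0 := by simp [monDeg]

lemma monDeg_eq_zero' {d : σ →₀ ℕ} (h : monDeg d = 0) : d = 0 := by
  rw [monDeg, Finsupp.sum] at h
  ext a
  by_cases ha : a ∈ d.support
  · exact Finset.sum_eq_zero_iff.mp h a ha
  · simpa using Finsupp.notMem_support_iff.mp ha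

lemma coeff_pow_ne' {N : ℕ} {u : MvPowerSeries σ ℚ}
    (hu : ∀ d, MvPowerSeries.coeff d u ≠ 0 → monDeg d = N) :
    ∀ k (d : σ →₀ ℕ), monDeg d ≠ N * k → MvPowerSeries.coeff d (u ^ k) = 0 := by
  classical
  intro k
  induction k with
  | zero =>
    intro d hd
    rw [pow_zero, MvPowerSeries.coeff_one, if_neg]
    intro h
    subst h
    exact hd (by simp [monDeg_zero'])
  | succ j ih =>
    intro d hd
    rw [pow_succ', MvPowerSeries.coeff_mul]
    apply Finset.sum_eq_zero
    rintro ⟨p, q⟩ hpq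
    rw [Finset.HasAntidiagonal.mem_antidiagonal] at hpq
    by_cases h1 : MvPowerSeries.coeff p u = 0
    · simp [h1]
    by_cases h2 : MvPowerSeries.coeff q (u ^ j) = 0
    · simp [h2]
    exfalso
    have hp := hu p h1
    have hq : monDeg q = N * j := by
      by_contra h
      exact h2 (ih q h)
    apply hd
    rw [← hpq, monDeg_add', hp, hq]
    ring

/-- for `u` homogeneous of degree `N`, `1 - u` is invertible, its inverse
lies in `Θ`, and `E((1-u)⁻¹) = exp(q·u)`. -/
theorem Etrans_inv_one_sub {σ : Type*} (N : ℕ) (hN : 1 ≤ N)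
    (u : MvPowerSeries σ ℚ) (hu : IsHomogDeg N u) :
    IsUnit (1 - u) ∧ InTheta N (1 - u)⁻¹ ∧ Etrans N ((1 - u)⁻¹) = expQ u := by
  classical
  have hNpos : 0 < N := hN
  have hu2 := hu.2
  have hpow := coeff_pow_ne' hu2
  have hu0 : MvPowerSeries.coeff 0 u = 0 := by
    by_contra h
    have := hu2 0 h
    rw [monDeg_zero'] at this
    omega
  -- the candidate inverse
  set V : MvPowerSeries σ ℚ := fun d => MvPowerSeries.coeff d (u ^ (monDeg d / N)) with hV
  have hVc : ∀ d : σ →₀ ℕ, MvPowerSeries.coeff d V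
      = MvPowerSeries.coeff d (u ^ (monDeg d / N)) := fun d => rfl
  -- key multiplicative identity
  have key : (1 - u) * V = 1 := by
    ext d
    rw [sub_mul, one_mul, map_sub, hVc, MvPowerSeries.coeff_one]
    by_cases hdvd : N ∣ monDeg d
    · obtain ⟨k, hk⟩ := hdvd
      cases k with
      | zero =>
        have hd0 : d = 0 := monDeg_eq_zero' (by omega)
        subst hd0
        rw [if_pos rfl]
        have h1 : monDeg (0 : σ →₀ ℕ) / N = 0 := by rw [monDeg_zero']; simp
        have hmul : MvPowerSeries.coeff (0 : σ →₀ ℕ) (u * V) = 0 := by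
          rw [MvPowerSeries.coeff_mul]
          apply Finset.sum_eq_zero
          rintro ⟨p, q⟩ hpq
          rw [Finset.HasAntidiagonal.mem_antidiagonal] at hpq
          have hpq' : p + q = 0 := hpq
          have hp0 : p = 0 := by
            have h2 := congrArg monDeg hpq'
            rw [monDeg_add', monDeg_zero'] at h2
            exact monDeg_eq_zero' (by omega)
          subst hp0
          rw [hu0, zero_mul]
        rw [hmul, h1, pow_zero, MvPowerSeries.coeff_one, if_pos rfl]
        ring
      | succ j =>
        have hdne : d ≠ 0 := by
          intro h
          subst h
          rw [monDeg_zero'] at hk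
          have : 0 < N * (j + 1) := Nat.mul_pos hNpos (Nat.succ_pos j)
          omega
        rw [if_neg hdne]
        have hdiv : monDeg d / N = j + 1 := by rw [hk]; exact Nat.mul_div_cancel_left _ hNpos
        rw [hdiv]
        have : MvPowerSeries.coeff d (u ^ (j + 1)) = MvPowerSeries.coeff d (u * V) := by
          rw [pow_succ', MvPowerSeries.coeff_mul, MvPowerSeries.coeff_mul]
          apply Finset.sum_congr rfl
          rintro ⟨p, q⟩ hpq
          rw [Finset.HasAntidiagonal.mem_antidiagonal] at hpq
          by_cases h1 : MvPowerSeries.coeff p u = 0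
          · simp [h1]
          have hp := hu2 p h1
          have hpq' : p + q = d := hpq
          have hq : monDeg q = N * j := by
            have h2 := congrArg monDeg hpq'
            rw [monDeg_add', hp, hk] at h2
            have h3 : N * (j + 1) = N * j + N := by ring
            omega
          have hqdiv : monDeg q / N = j := by rw [hq]; exact Nat.mul_div_cancel_left _ hNpos
          rw [hVc, hqdiv]
        rw [this]
        ring
    · have hdne : d ≠ 0 := by
        intro h
        subst h
        rw [monDeg_zero'] at hdvd
        exact hdvd ⟨0, rfl⟩
      rw [if_neg hdne]
      have hVd : MvPowerSeries.coeff d (u ^ (monDeg d / N)) = 0 := by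
        apply hpow
        intro h
        exact hdvd ⟨monDeg d / N, h⟩
      have hmul : MvPowerSeries.coeff d (u * V) = 0 := by
        rw [MvPowerSeries.coeff_mul]
        apply Finset.sum_eq_zero
        rintro ⟨p, q⟩ hpq
        rw [Finset.HasAntidiagonal.mem_antidiagonal] at hpq
        by_cases h1 : MvPowerSeries.coeff p u = 0
        · simp [h1]
        have hp := hu2 p h1
        have hpq' : p + q = d := hpq
        have hsum : monDeg p + monDeg q = monDeg d := by
          rw [← monDeg_add', hpq']
        have hVq : MvPowerSeries.coeff q V = 0 := by
          rw [hVc]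
          apply hpow
          intro h
          exact hdvd ⟨1 + monDeg q / N, by rw [← hsum, hp, Nat.mul_add, Nat.mul_one, ← h]⟩
        rw [hVq, mul_zero]
      rw [hVd, hmul]
      ring
  have keyc : V * (1 - u) = 1 := by rw [mul_comm]; exact key
  have hunit : IsUnit (1 - u) := IsUnit.of_mul_eq_one V key
  have hcc : MvPowerSeries.constantCoeff (1 - u) ≠ 0 := by
    rw [map_sub, map_one]
    have : MvPowerSeries.constantCoeff u = 0 := hu0
    rw [this, sub_zero]
    exact one_ne_zero
  have hinv : (1 - u)⁻¹ = V := by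
    symm
    rw [MvPowerSeries.eq_inv_iff_mul_eq_one hcc]
    exact keyc
  refine ⟨hunit, ?_, ?_⟩
  · intro d hd
    rw [hinv, hVc]
    apply hpow
    intro h
    exact hd ⟨monDeg d / N, h⟩
  · rw [hinv]
    have hhom : ∀ k, homComp N V k = u ^ k := by
      intro k
      ext d
      show (if monDeg d = N * k then MvPowerSeries.coeff d V else 0)
          = MvPowerSeries.coeff d (u ^ k)
      by_cases h : monDeg d = N * k
      · rw [if_pos h, hVc]
        congr 2
        rw [h]
        exact Nat.mul_div_cancel_left _ hNpos
      · rw [if_neg h, hpow k d h]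
    ext k
    rw [Etrans, expQ, PowerSeries.coeff_mk, PowerSeries.coeff_mk, hhom]
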